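/- Let π be a k-colored permutation with insertion pair (P, Q) = (P(π), Q(π)). If the shadow line L_i of the square diagram of π passes through two X's, the leftmost being X^{j_1} and the rightmost being X^{j_2}, then the i-th column of P is a column of height 2 whose top k-ribbon has height j_2 and whose bottom k-ribbon has height k+1−j_2, while the column of Q in the same position is a column of height 2 whose bottom k-ribbon has height j_1 and whose top k-ribbon has height k+1−j_1. -/

import Mathlib

namespace KRF

/-- A letter of the alphabet `{1_1, …, 1_k, 2}`:  `one j` stands for the letter `1_j`
(with `1 ≤ j ≤ k` for genuine letters), and `two` stands for the letter `2`. -/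
inductive Letter (k : ℕ) : Type where
  | one : ℕ → Letter k
  | two : Letter k
deriving DecidableEq

/-- A word over the alphabet `{1_1, …, 1_k, 2}`, listed from the leftmost letter to the
rightmost letter. -/
abbrev Word (k : ℕ) := List (Letter k)

/-- The contribution of a letter to the rank: each `1_j` counts `1` and each `2` counts `2`. -/
def Letter.rank {k : ℕ} : Letter k → ℕ
  | .one _ => 1
  | .two => 2

/-- The rank of a word: the sum of its letters. -/
def Word.rank {k : ℕ} (w : Word k) : ℕ := (w.map Letter.rank).sum

/-- The letter `1_j` is valid when `1 ≤ j ≤ k`. -/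
def Letter.Valid (k : ℕ) : Letter k → Prop
  | .one j => 1 ≤ j ∧ j ≤ k
  | .two => True

/-- A genuine word of the Fibonacci poset `Z(k)`: all of its letters are valid. -/
def Word.Valid (k : ℕ) (w : Word k) : Prop := ∀ l ∈ w, l.Valid k

/-- The cover relation of the Fibonacci poset `Z(k)`:  `z` is covered by `w` iff `z` is
obtained from `w` either by changing a `2` into some `1_j` when all letters to the left of
that `2` are `2`'s, or by deleting the leftmost letter of the form `1_j`. -/
def ZCovers (k : ℕ) (z w : Word k) : Prop :=
  (∃ (p s : Word k) (j : ℕ), (∀ l ∈ p, l = Letter.two) ∧ 1 ≤ j ∧ j ≤ k ∧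
      w = p ++ Letter.two :: s ∧ z = p ++ Letter.one j :: s) ∨
  (∃ (p s : Word k) (j : ℕ), (∀ l ∈ p, l = Letter.two) ∧ 1 ≤ j ∧ j ≤ k ∧
      w = p ++ Letter.one j :: s ∧ z = p ++ s)

/-- `c 0 ⋖ c 1 ⋖ ⋯ ⋖ c n` is a saturated chain in `Z(k)` starting at the empty word. -/
def IsZChain (k n : ℕ) (c : ℕ → Word k) : Prop :=
  c 0 = [] ∧ ∀ i, i < n → ZCovers k (c i) (c (i + 1))

end KRF
namespace KRF

/-- A column of a (tiled and filled) `k`-ribbon Fibonacci tableau.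
`single h v` is a column of height 1 (shape letter `1_h`) tiled by one `k`-ribbon of
height `h` filled with the value `v`.
`double ht hb vt vb` is a column of height 2 (shape letter `2`) tiled by a `k`-ribbon of
height `ht` filled with `vt` stacked on top of a `k`-ribbon of height `hb` (always
`hb = k + 1 - ht` for genuine tableaux) filled with `vb`. -/
inductive Col (k : ℕ) : Type where
  | single : ℕ → ℕ → Col k
  | double : ℕ → ℕ → ℕ → ℕ → Col k
deriving DecidableEq

/-- A (tiled, filled) `k`-ribbon Fibonacci tableau: its list of columns, from the leftmost
column to the rightmost one. -/
abbrev Tab (k : ℕ) := List (Col k)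

/-- The shape letter of a column. -/
def Col.shape {k : ℕ} : Col k → Letter k
  | .single h _ => Letter.one h
  | .double _ _ _ _ => Letter.two

/-- The `k`-ribbon Fibonacci shape (a word) underlying a tableau. -/
def Tab.shape {k : ℕ} (T : Tab k) : Word k := T.map Col.shape

/-- The value in the bottom `k`-ribbon of a column. -/
def Col.bottomVal {k : ℕ} : Col k → ℕ
  | .single _ v => v
  | .double _ _ _ vb => vb

/-- The heights occurring in a column are genuine ribbon heights: between `1` and `k`,
and in a column of height 2 the two heights sum to `k + 1`. -/
def Col.HeightsValid (k : ℕ) : Col k → Prop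
  | .single h _ => 1 ≤ h ∧ h ≤ k
  | .double ht hb _ _ => 1 ≤ ht ∧ ht ≤ k ∧ hb = k + 1 - ht

/-- The list of all entries of a tableau (one for each `k`-ribbon). -/
def Tab.entries {k : ℕ} (T : Tab k) : List ℕ :=
  (T.map fun c => match c with
    | Col.single _ v => [v]
    | Col.double _ _ vt vb => [vt, vb]).flatten

/-- The list of the bottom-ribbon values of the columns of a tableau. -/
def Tab.bottoms {k : ℕ} (T : Tab k) : List ℕ := T.map Col.bottomVal

/-- `T` is a standard `k`-ribbon Fibonacci tableau with entries `1, …, n`: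
heights are valid, the entries are exactly `1, …, n`,  and the tableau can be built by
placing `n, n-1, …, 1` in order, each new `k`-ribbon being either appended (as a new
rightmost height-1 column) to the shape formed by the `k`-ribbons containing larger
entries, or stacked on top of a single such `k`-ribbon.  Equivalently (and this is how we
formalize it): the bottom entries strictly decrease from left to right (in particular the
`k`-ribbon containing the leftmost square of the bottom row contains `n`), and in each
column of height 2 the top entry is smaller than the bottom entry. -/
def IsStandardTab (k n : ℕ) (T : Tab k) : Prop :=
  (∀ c ∈ T, Col.HeightsValid k c) ∧
  (Tab.entries T).Perm (List.range' 1 n) ∧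
  List.Chain' (fun a b => b < a) (Tab.bottoms T) ∧
  (∀ c ∈ T, ∀ ht hb vt vb, c = Col.double ht hb vt vb → vt < vb)

/-- Updating a (partial) path tableau along one cover step `z ⋖ w` of `Z(k)`, placing the
value `i` in the `k` new squares of `w` relative to `z`:  if `w` is obtained from `z` by
inserting a letter `1_j` after the prefix of `2`'s, a new height-1 column with a single
ribbon of height `j` filled with `i` is created there; if `w` is obtained from `z` by
changing the letter `1_h` just after the prefix of `2`'s into a `2`, the `k` new squares
of that column form a `k`-ribbon of height `k + 1 - h` filled with `i`, stacked on top of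
the already present `k`-ribbon of height `h`. -/
def updateTab (k : ℕ) (i : ℕ) : Word k → Word k → Tab k → Tab k
  | Letter.two :: z', Letter.two :: w', c :: T => c :: updateTab k i z' w' T
  | Letter.one h :: _, Letter.two :: _, Col.single _ v :: T =>
      Col.double (k + 1 - h) h i v :: T
  | z, Letter.one j :: w', T => if z = w' then Col.single j i :: T else T
  | _, _, T => T

/-- The `k`-ribbon Fibonacci path tableau determined by a saturated chain in `Z(k)`:
for each `i = 1, …, n` the value `i` is placed in the `k` new squares of `c i` relative
to `c (i-1)`. -/
def chainTab (k : ℕ) (c : ℕ → Word k) : ℕ → Tab k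
  | 0 => []
  | m + 1 => updateTab k (m + 1) (c m) (c (m + 1)) (chainTab k c m)

/-- `T` is a `k`-ribbon Fibonacci path tableau with entries `1, …, n`: it is obtained
from some saturated chain `∅ = c 0 ⋖ c 1 ⋖ ⋯ ⋖ c n` in `Z(k)` by placing `i`'s in the
`k` new squares created at the `i`-th step. -/
def IsPathTab (k n : ℕ) (T : Tab k) : Prop :=
  ∃ c : ℕ → Word k, IsZChain k n c ∧ T = chainTab k c n

end KRF
namespace KRF

/-- A `k`-colored permutation of length `n`: a permutation `x_1 x_2 ⋯ x_n` of `{1, …, n}`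
(here `x_i = perm i + 1`, using `Fin n` positions and values) together with a color
`color i ∈ {1, …, k}` attached to each entry. -/
structure ColoredPerm (n k : ℕ) : Type where
  perm : Equiv.Perm (Fin n)
  color : Fin n → ℕ
  color_pos : ∀ i, 1 ≤ color i
  color_le : ∀ i, color i ≤ k

/-- Insertion of a value `x` of color `j` into a `k`-ribbon Fibonacci tableau: compare `x`
with the value `t` in the `k`-ribbon containing the leftmost square of the bottom row.
If the tableau is empty or `x > t`, a new leftmost height-1 column consisting of a single
`k`-ribbon of height `j` filled with `x` is created.  If `x < t`, a `k`-ribbon of height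
`j` filled with `x` is placed on top of the `k`-ribbon containing `t` (which is forced to
become a `k`-ribbon of height `k + 1 - j`); if a `k`-ribbon of height `l` filled with `b`
was already on top of the ribbon containing `t`, it is bumped out and the value `b` with
color `l` is inserted recursively into the tableau formed by the columns to the right. -/
def insertVal (k : ℕ) (x j : ℕ) : Tab k → Tab k
  | [] => [Col.single j x]
  | c :: rest =>
    if Col.bottomVal c < x then Col.single j x :: c :: rest
    else
      match c with
      | Col.single _ v => Col.double j (k + 1 - j) x v :: rest
      | Col.double ht _ vt vb => Col.double j (k + 1 - j) x vb :: insertVal k vt ht rest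

/-- The insertion tableau obtained after inserting the first `i` colored entries
`x_1^{j_1}, …, x_i^{j_i}` of the `k`-colored permutation `π` into the empty tableau. -/
def PPartial (k n : ℕ) (π : ColoredPerm n k) (i : ℕ) : Tab k :=
  ((List.finRange n).take i).foldl
    (fun T m => insertVal k ((π.perm m : ℕ) + 1) (π.color m) T) []

/-- The insertion tableau `P(π)` of a `k`-colored permutation. -/
def PTab (k n : ℕ) (π : ColoredPerm n k) : Tab k := PPartial k n π n

/-- The chain of shapes of the partial insertion tableaux of `π`. -/
def QChain (k n : ℕ) (π : ColoredPerm n k) (i : ℕ) : Word k :=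
  Tab.shape (PPartial k n π i)

/-- The recording tableau `Q(π)`: it has the same shape as `P(π)`, and after the `i`-th
insertion the value `i` is placed in the `k` squares by which the shape grew at step `i`. -/
def QTab (k n : ℕ) (π : ColoredPerm n k) : Tab k := chainTab k (QChain k n π) n

end KRF
namespace KRF

/-- The recursive construction of the shadow lines of a square diagram, applied to the set
`S` of the positions of the `X`'s not lying on a previously drawn line.  Each line is
recorded as the pair `(i₁, i₂)` where `i₁` is the position (column) of the highest
remaining `X` and `i₂` is the rightmost remaining column containing an `X`; the line
passes through these one or two `X`'s, which are then removed. -/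
def shadowAux (n : ℕ) (p : Equiv.Perm (Fin n)) (S : Finset (Fin n)) :
    List (Fin n × Fin n) :=
  if h : S.Nonempty then
    (p.symm ((S.image p).max' (h.image p)), S.max' h) ::
      shadowAux n p ((S.erase (p.symm ((S.image p).max' (h.image p)))).erase (S.max' h))
  else []
termination_by S.card
decreasing_by
  have h1 : p.symm ((S.image p).max' (h.image p)) ∈ S := by
    obtain ⟨a, ha, hpa⟩ := Finset.mem_image.mp (Finset.max'_mem (S.image p) (h.image p))
    simpa [← hpa] using ha
  calc ((S.erase (p.symm ((S.image p).max' (h.image p)))).erase (S.max' h)).card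
      ≤ (S.erase (p.symm ((S.image p).max' (h.image p)))).card := Finset.card_erase_le
    _ < S.card := Finset.card_erase_lt_of_mem h1

/-- The list of shadow lines `L₁, L₂, …` of the square diagram of the `k`-colored
permutation `π`.  The `s`-th entry is the pair `(i₁, i₂)` of positions of the `X`'s
through which `L_s` passes: `i₁` is the column of the highest `X` on the line and `i₂` is
the rightmost column of an `X` on the line (the line passes through a single `X` exactly
when `i₁ = i₂`; when `i₁ ≠ i₂` the `X` in column `i₁` is the leftmost, higher one). -/
def shadowLines {n k : ℕ} (π : ColoredPerm n k) : List (Fin n × Fin n) :=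
  shadowAux n π.perm Finset.univ

end KRF
namespace KRF

open List

/-! ### Height-equivalence of columns and tableaux -/

def Col.sameH {k : ℕ} : Col k → Col k → Prop
  | .single h _, .single h' _ => h = h'
  | .double a b _ _, .double a' b' _ _ => a = a' ∧ b = b'
  | _, _ => False

lemma Col.sameH.refl {k : ℕ} (c : Col k) : Col.sameH c c := by
  cases c <;> simp [Col.sameH]

abbrev TEq {k : ℕ} (T T' : Tab k) : Prop := List.Forall₂ Col.sameH T T'

lemma TEq.refl {k : ℕ} (T : Tab k) : TEq T T :=
  List.forall₂_same.2 fun c _ => Col.sameH.refl c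

lemma TEq.getElem? {k : ℕ} {T T' : Tab k} (h : TEq T T') {i : ℕ} {a b vt vb : ℕ}
    (h' : T'[i]? = some (Col.double a b vt vb)) :
    ∃ vt' vb', T[i]? = some (Col.double a b vt' vb') := by
  induction h generalizing i with
  | nil => simp at h'
  | cons hc _ ih =>
    cases i with
    | zero =>
      simp only [getElem?_cons_zero, Option.some.injEq] at h' ⊢
      subst h'
      rename_i c _ _ _
      cases c with
      | single h v => exact absurd hc (by simp [Col.sameH])
      | double a' b' vt' vb' =>
        obtain ⟨rfl, rfl⟩ := hc
        exact ⟨vt', vb', rfl⟩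
    | succ i => simpa using ih (by simpa using h')

/-! ### List-level insertion -/

def ins (k : ℕ) (T : Tab k) (e : ℕ × ℕ) : Tab k := insertVal k e.1 e.2 T

def Pfold (k : ℕ) (L : List (ℕ × ℕ)) : Tab k := L.foldl (ins k) []

def vals (L : List (ℕ × ℕ)) : List ℕ := L.map Prod.fst

lemma Pfold_append {k : ℕ} (L L' : List (ℕ × ℕ)) :
    Pfold k (L ++ L') = L'.foldl (ins k) (Pfold k L) := List.foldl_append ..


lemma insertVal_nil {k : ℕ} (x j : ℕ) : insertVal k x j [] = [Col.single j x] := rfl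

lemma insertVal_cons_lt {k : ℕ} {x j : ℕ} {c : Col k} {rest : Tab k}
    (h : Col.bottomVal c < x) :
    insertVal k x j (c :: rest) = Col.single j x :: c :: rest := by
  cases c <;> simp [insertVal, Col.bottomVal] at h ⊢ <;> simp [h]

lemma insertVal_single {k : ℕ} {x j h v : ℕ} {rest : Tab k} (hx : ¬ v < x) :
    insertVal k x j (Col.single h v :: rest) =
      Col.double j (k + 1 - j) x v :: rest := by
  simp [insertVal, Col.bottomVal, hx]

lemma insertVal_double {k : ℕ} {x j ht hb vt vb : ℕ} {rest : Tab k} (hx : ¬ vb < x) :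
    insertVal k x j (Col.double ht hb vt vb :: rest) =
      Col.double j (k + 1 - j) x vb :: insertVal k vt ht rest := by
  simp [insertVal, Col.bottomVal, hx]

lemma entries_insertVal {k : ℕ} (x j : ℕ) (T : Tab k) :
    ∀ a ∈ Tab.entries (insertVal k x j T), a = x ∨ a ∈ Tab.entries T := by
  induction T generalizing x j with
  | nil => intro a ha; simp [insertVal, Tab.entries] at ha; simp [ha]
  | cons c rest ih =>
    intro a ha
    by_cases hb : Col.bottomVal c < x
    · rw [insertVal_cons_lt hb] at ha
      simp only [Tab.entries, List.map_cons, List.flatten_cons, List.mem_append,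
        List.mem_singleton] at ha ⊢
      rcases ha with h | h
      · left; simpa using h
      · right; exact h
    · cases c with
      | single h v =>
        rw [insertVal_single (by simpa [Col.bottomVal] using hb)] at ha
        simp only [Tab.entries, List.map_cons, List.flatten_cons, List.mem_append] at ha ⊢
        rcases ha with h | h
        · simp at h
          rcases h with h | h
          · exact Or.inl h
          · exact Or.inr (Or.inl (by simp [h]))
        · exact Or.inr (Or.inr h)
      | double ht hb' vt vb =>
        rw [insertVal_double (by simpa [Col.bottomVal] using hb)] at ha
        simp only [Tab.entries, List.map_cons, List.flatten_cons, List.mem_append] at ha ⊢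
        rcases ha with h | h
        · simp at h
          rcases h with h | h
          · exact Or.inl h
          · exact Or.inr (Or.inl (by simp [h]))
        · rcases ih vt ht a (by simpa [Tab.entries] using h) with h' | h'
          · exact Or.inr (Or.inl (by simp [h']))
          · exact Or.inr (Or.inr h')

lemma entries_Pfold {k : ℕ} (L : List (ℕ × ℕ)) :
    ∀ a ∈ Tab.entries (Pfold k L), a ∈ vals L := by
  induction L using List.reverseRecOn with
  | nil => intro a ha; simp [Pfold, Tab.entries] at ha
  | append_singleton L e ih =>
    intro a ha
    rw [Pfold_append] at ha
    simp only [List.foldl_cons, List.foldl_nil] at ha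
    rcases entries_insertVal e.1 e.2 (Pfold k L) a ha with h | h
    · simp [vals, h]
    · simp only [vals, List.map_append, List.mem_append]
      exact Or.inl (ih a h)

lemma bottomVal_head_mem {k : ℕ} (c : Col k) (T : Tab k) :
    Col.bottomVal c ∈ Tab.entries (c :: T) := by
  cases c <;> simp [Tab.entries, Col.bottomVal]


/-! ### Inserting a maximal element: head-column decomposition -/

lemma Pfold_max_nil {k : ℕ} (A : List (ℕ × ℕ)) (M j : ℕ)
    (hA : ∀ v ∈ vals A, v < M) :
    Pfold k (A ++ [(M, j)]) = Col.single j M :: Pfold k A := by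
  rw [Pfold_append]
  simp only [List.foldl_cons, List.foldl_nil]
  show insertVal k M j (Pfold k A) = _
  rcases hP : Pfold k A with _ | ⟨c, T⟩
  · exact insertVal_nil M j
  · refine insertVal_cons_lt ?_
    apply hA
    apply entries_Pfold
    rw [hP]
    exact bottomVal_head_mem c T

lemma Pfold_max_snoc {k : ℕ} (A : List (ℕ × ℕ)) (M j : ℕ)
    (hA : ∀ v ∈ vals A, v < M) :
    ∀ B₀ : List (ℕ × ℕ), ∀ x jx : ℕ, (∀ v ∈ vals B₀, v < M) → x < M →
    Pfold k (A ++ (M, j) :: (B₀ ++ [(x, jx)])) =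
      Col.double jx (k + 1 - jx) x M :: Pfold k (A ++ B₀) := by
  intro B₀
  induction B₀ using List.reverseRecOn with
  | nil =>
    intro x jx _ hx
    have : A ++ (M, j) :: ([] ++ [(x, jx)]) = (A ++ [(M, j)]) ++ [(x, jx)] := by simp
    rw [this, Pfold_append, Pfold_max_nil A M j hA]
    simp only [List.foldl_cons, List.foldl_nil, List.append_nil]
    show insertVal k x jx _ = _
    rw [insertVal_single (by omega)]
  | append_singleton C e ih =>
    intro x jx hB hx
    obtain ⟨y, jy⟩ := e
    have hy : y < M := hB y (by simp [vals])
    have hC : ∀ v ∈ vals C, v < M := fun v hv => hB v (by simp [vals] at hv ⊢; tauto)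
    have : A ++ (M, j) :: ((C ++ [(y, jy)]) ++ [(x, jx)]) =
        (A ++ (M, j) :: (C ++ [(y, jy)])) ++ [(x, jx)] := by simp
    rw [this, Pfold_append, ih y jy hC hy]
    simp only [List.foldl_cons, List.foldl_nil]
    show insertVal k x jx _ = _
    rw [insertVal_double (by omega)]
    congr 1
    show insertVal k y jy (Pfold k (A ++ C)) = _
    rw [show A ++ (C ++ [(y, jy)]) = (A ++ C) ++ [(y, jy)] by simp,
      Pfold_append (A ++ C) [(y, jy)], Pfold_append A C]
    rfl

/-! ### The chain of shapes of partial insertions, and the list-level recording tableau -/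

def lchain (k : ℕ) (L : List (ℕ × ℕ)) : ℕ → Word k :=
  fun m => Tab.shape (Pfold k (L.take m))

def qOf (k : ℕ) (L : List (ℕ × ℕ)) : Tab k := chainTab k (lchain k L) L.length

lemma dropLast_take {α : Type*} (l : List α) (m : ℕ) (h : m ≤ l.length) :
    (l.take m).dropLast = l.take (m - 1) := by
  rw [List.dropLast_eq_take, List.take_take]
  congr 1
  simp
  omega

lemma take_dropLast {α : Type*} (l : List α) (m : ℕ) (h : m ≤ l.length - 1) :
    l.dropLast.take m = l.take m := by
  rw [List.dropLast_eq_take, List.take_take]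
  congr 1
  omega

lemma chainTab_congr {k : ℕ} (c c' : ℕ → Word k) (m : ℕ)
    (h : ∀ i ≤ m, c i = c' i) : chainTab k c m = chainTab k c' m := by
  induction m with
  | zero => rfl
  | succ m ih =>
    show updateTab k (m+1) (c m) (c (m+1)) (chainTab k c m) = _
    rw [h m (by omega), h (m+1) (by omega), ih fun i hi => h i (by omega)]
    rfl

/-! ### Reduction lemmas for `updateTab` -/

lemma updateTab_new {k i : ℕ} (j : ℕ) (z : Word k) (T : Tab k) :
    updateTab k i z (Letter.one j :: z) T = Col.single j i :: T := by
  rcases z with _ | ⟨a | a, z⟩ <;> simp [updateTab]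

lemma updateTab_grow {k i : ℕ} (h : ℕ) (z w : Word k) (hh v : ℕ) (T : Tab k) :
    updateTab k i (Letter.one h :: z) (Letter.two :: w) (Col.single hh v :: T) =
      Col.double (k + 1 - h) h i v :: T := rfl

lemma updateTab_two {k i : ℕ} (z w : Word k) (c : Col k) (T : Tab k) :
    updateTab k i (Letter.two :: z) (Letter.two :: w) (c :: T) =
      c :: updateTab k i z w T := rfl

lemma updateTab_sameH {k : ℕ} (i i' : ℕ) :
    ∀ (z w : Word k) (T T' : Tab k), TEq T T' →
      TEq (updateTab k i z w T) (updateTab k i' z w T') := by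
  intro z
  induction z with
  | nil =>
    intro w T T' h
    rcases w with _ | ⟨aj | a, w⟩
    · exact h
    · by_cases hc : ([] : Word k) = w <;> simp [updateTab, hc] <;>
        [exact ⟨rfl, h⟩; exact h]
    · exact h
  | cons a z ih =>
    intro w T T' h
    cases a with
    | one hh =>
      rcases w with _ | ⟨aj | a, w⟩
      · exact h
      · by_cases hc : Letter.one hh :: z = w <;> simp [updateTab, hc] <;>
          [exact ⟨rfl, h⟩; exact h]
      · cases h with
        | nil => exact List.Forall₂.nil
        | cons hc htl =>
          rename_i c c' T T'
          cases c with
          | single h1 v1 =>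
            cases c' with
            | single h2 v2 =>
              rw [updateTab_grow, updateTab_grow]
              exact List.Forall₂.cons ⟨rfl, rfl⟩ htl
            | double a b x y => exact absurd hc (by simp [Col.sameH])
          | double a1 b1 x1 y1 =>
            cases c' with
            | single h2 v2 => exact absurd hc (by simp [Col.sameH])
            | double a2 b2 x2 y2 =>
              show TEq (Col.double a1 b1 x1 y1 :: T) (Col.double a2 b2 x2 y2 :: T')
              exact List.Forall₂.cons hc htl
    | two =>
      rcases w with _ | ⟨aj | a, w⟩
      · exact h
      · by_cases hc : Letter.two :: z = w <;> simp [updateTab, hc] <;>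
          [exact ⟨rfl, h⟩; exact h]
      · cases h with
        | nil => exact List.Forall₂.nil
        | cons hc htl =>
          rw [updateTab_two, updateTab_two]
          exact List.Forall₂.cons hc (ih w _ _ htl)

/-! ### Decomposition of the recording tableau at a maximal entry -/

lemma lchain_prefix {k : ℕ} (A X : List (ℕ × ℕ)) {i : ℕ} (hi : i ≤ A.length) :
    lchain k (A ++ X) i = Tab.shape (Pfold k (A.take i)) := by
  unfold lchain
  rw [List.take_append_of_le_length hi]

lemma qOf_max_nil {k : ℕ} (A : List (ℕ × ℕ)) (M j : ℕ)
    (hA : ∀ v ∈ vals A, v < M) :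
    qOf k (A ++ [(M, j)]) = Col.single j (A.length + 1) :: qOf k A := by
  have hlen : (A ++ [(M, j)]).length = A.length + 1 := by simp
  unfold qOf
  rw [hlen]
  show updateTab k (A.length + 1) (lchain k (A ++ [(M, j)]) A.length)
      (lchain k (A ++ [(M, j)]) (A.length + 1)) (chainTab k (lchain k (A ++ [(M, j)])) A.length) = _
  have h1 : lchain k (A ++ [(M, j)]) A.length = Tab.shape (Pfold k A) := by
    rw [lchain_prefix A _ (le_refl _), List.take_length]
  have h2 : lchain k (A ++ [(M, j)]) (A.length + 1) =
      Letter.one j :: Tab.shape (Pfold k A) := by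
    unfold lchain
    rw [show (A ++ [(M, j)]).take (A.length + 1) = A ++ [(M, j)] by
      rw [← hlen, List.take_length], Pfold_max_nil A M j hA]
    rfl
  have h3 : chainTab k (lchain k (A ++ [(M, j)])) A.length =
      chainTab k (lchain k A) A.length := by
    apply chainTab_congr
    intro i hi
    rw [lchain_prefix A _ hi]
    unfold lchain
    rfl
  rw [h1, h2, h3, updateTab_new]

lemma qOf_max_snoc {k : ℕ} (A B : List (ℕ × ℕ)) (M j : ℕ)
    (hA : ∀ v ∈ vals A, v < M) (hB : ∀ v ∈ vals B, v < M) (hBne : B ≠ []) :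
    ∃ a b T, qOf k (A ++ (M, j) :: B) = Col.double (k + 1 - j) j a b :: T ∧
      TEq T (qOf k (A ++ B.dropLast)) := by
  set L := A ++ (M, j) :: B with hL
  set c := lchain k L with hc
  set c' := lchain k (A ++ B.dropLast) with hc'
  have hBlen : 1 ≤ B.length := List.length_pos_iff.mpr hBne
  -- chain values of the big word
  have f1 : c A.length = Tab.shape (Pfold k A) := by
    rw [hc, hL, lchain_prefix A _ (le_refl _), List.take_length]
  have f2 : c (A.length + 1) = Letter.one j :: Tab.shape (Pfold k A) := by
    rw [hc, hL]
    unfold lchain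
    rw [List.take_length_add_append 1]
    show Tab.shape (Pfold k (A ++ [(M, j)])) = _
    rw [Pfold_max_nil A M j hA]
    rfl
  have f3 : ∀ s, 1 ≤ s → s ≤ B.length →
      c (A.length + 1 + s) = Letter.two :: Tab.shape (Pfold k (A ++ B.take (s - 1))) := by
    intro s hs1 hs2
    rw [hc, hL]
    unfold lchain
    rw [show A.length + 1 + s = A.length + (1 + s) by omega, List.take_length_add_append (1 + s)]
    have htake : ((M, j) :: B).take (1 + s) = (M, j) :: B.take s := by
      rw [show 1 + s = s + 1 by omega]
      rfl
    rw [htake]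
    have hBs : B.take s ≠ [] := by
      intro hnil
      have : (B.take s).length = s := by rw [List.length_take]; omega
      rw [hnil] at this
      simp at this
      omega
    obtain ⟨x, jx, hxe⟩ : ∃ x jx, (B.take s).getLast hBs = (x, jx) :=
      ⟨_, _, rfl⟩
    have hsplit := List.dropLast_append_getLast hBs
    rw [hxe] at hsplit
    have hmemB : ∀ e ∈ B.take s, e ∈ B := fun e he => List.mem_of_mem_take he
    have hvals : ∀ v ∈ vals (B.take s).dropLast, v < M := by
      intro v hv
      apply hB
      simp only [vals, List.mem_map] at hv ⊢
      obtain ⟨e, he, rfl⟩ := hv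
      exact ⟨e, hmemB e (List.dropLast_subset _ he), rfl⟩
    have hx : x < M := by
      apply hB
      simp only [vals, List.mem_map]
      exact ⟨(x, jx), hmemB _ (hxe ▸ List.getLast_mem hBs), rfl⟩
    rw [← hsplit, Pfold_max_snoc A M j hA (B.take s).dropLast x jx hvals hx,
      dropLast_take B s (by omega)]
    rfl
  have f4 : ∀ t, c' (A.length + t) = Tab.shape (Pfold k (A ++ B.dropLast.take t)) := by
    intro t
    rw [hc']
    unfold lchain
    rw [List.take_length_add_append t]
  have f5 : ∀ s, 1 ≤ s → s ≤ B.length →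
      c (A.length + 1 + s) = Letter.two :: c' (A.length + (s - 1)) := by
    intro s hs1 hs2
    rw [f3 s hs1 hs2, f4 (s - 1), take_dropLast B (s - 1) (by omega)]
  -- the common prefix
  have step0 : chainTab k c A.length = chainTab k c' A.length := by
    apply chainTab_congr
    intro i hi
    rw [hc, hL, lchain_prefix A _ hi, hc', lchain_prefix A _ hi]
  have step1 : chainTab k c (A.length + 1) =
      Col.single j (A.length + 1) :: chainTab k c A.length := by
    show updateTab k (A.length + 1) (c A.length) (c (A.length + 1)) (chainTab k c A.length) = _
    rw [f1, f2, updateTab_new]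
  -- the two-column part, by induction
  have main : ∀ t, t + 1 ≤ B.length → ∃ a b T,
      chainTab k c (A.length + 2 + t) = Col.double (k + 1 - j) j a b :: T ∧
        TEq T (chainTab k c' (A.length + t)) := by
    intro t
    induction t with
    | zero =>
      intro ht
      refine ⟨A.length + 1 + 1, A.length + 1, chainTab k c A.length, ?_, ?_⟩
      · show updateTab k (A.length + 1 + 1) (c (A.length + 1)) (c (A.length + 1 + 1))
            (chainTab k c (A.length + 1)) = _
        rw [f2, f3 1 (le_refl _) ht, step1, updateTab_grow]
      · rw [step0]
        exact TEq.refl _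
    | succ t ih =>
      intro ht
      obtain ⟨a, b, T, hT, hTeq⟩ := ih (by omega)
      refine ⟨a, b, updateTab k (A.length + 2 + t + 1) (c' (A.length + t))
        (c' (A.length + t + 1)) T, ?_, ?_⟩
      · rw [show A.length + 2 + (t + 1) = (A.length + 2 + t) + 1 by omega]
        show updateTab k (A.length + 2 + t + 1) (c (A.length + 2 + t))
            (c (A.length + 2 + t + 1)) (chainTab k c (A.length + 2 + t)) = _
        rw [hT]
        have e1 : c (A.length + 2 + t) = Letter.two :: c' (A.length + t) := by
          have h := f5 (t + 1) (by omega) (by omega)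
          rw [show A.length + 1 + (t + 1) = A.length + 2 + t by omega,
            show A.length + (t + 1 - 1) = A.length + t by omega] at h
          exact h
        have e2 : c (A.length + 2 + t + 1) = Letter.two :: c' (A.length + t + 1) := by
          have h := f5 (t + 2) (by omega) (by omega)
          rw [show A.length + 1 + (t + 2) = A.length + 2 + t + 1 by omega,
            show A.length + (t + 2 - 1) = A.length + t + 1 by omega] at h
          exact h
        rw [e1, e2, updateTab_two]
      · rw [show A.length + (t + 1) = (A.length + t) + 1 by omega]
        show TEq _ (updateTab k (A.length + t + 1) (c' (A.length + t))
          (c' (A.length + t + 1)) (chainTab k c' (A.length + t)))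
        exact updateTab_sameH _ _ _ _ _ _ hTeq
  -- conclude
  obtain ⟨a, b, T, hT, hTeq⟩ := main (B.length - 1) (by omega)
  refine ⟨a, b, T, ?_, ?_⟩
  · rw [← hT]
    show chainTab k c L.length = _
    congr 1
    rw [hL]
    rw [List.length_append, List.length_cons]
    omega
  · have hlen : (A ++ B.dropLast).length = A.length + (B.length - 1) := by
      rw [List.length_append, List.length_dropLast]
    show TEq T (chainTab k c' (A ++ B.dropLast).length)
    rw [hlen]
    exact hTeq

/-! ### The list of colored entries of a set of columns -/

lemma sort_erase' {α : Type*} [LinearOrder α] [DecidableEq α] (s : Finset α) (x : α) :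
    (s.erase x).sort (·≤·) = (s.sort (·≤·)).erase x := by
  apply List.Perm.eq_of_pairwise' (Finset.pairwise_sort _ _)
    ((Finset.pairwise_sort s (·≤·)).sublist (List.erase_sublist))
  refine (List.perm_ext_iff_of_nodup (Finset.sort_nodup _ _)
    ((Finset.sort_nodup s (·≤·)).erase x)).mpr fun a => ?_
  rw [Finset.mem_sort, (Finset.sort_nodup s (·≤·)).mem_erase_iff, Finset.mem_erase,
    Finset.mem_sort]

def Lset {n k : ℕ} (π : ColoredPerm n k) (S : Finset (Fin n)) : List (ℕ × ℕ) :=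
  (S.sort (·≤·)).map fun m => ((π.perm m : ℕ) + 1, π.color m)

lemma Lset_decomp {n k : ℕ} (π : ColoredPerm n k) (S : Finset (Fin n)) (hS : S.Nonempty)
    (i₁ i₂ : Fin n)
    (hi₁ : i₁ = π.perm.symm ((S.image π.perm).max' (hS.image π.perm)))
    (hi₂ : i₂ = S.max' hS) :
    ∃ A B : List (ℕ × ℕ),
      Lset π S = A ++ ((π.perm i₁ : ℕ) + 1, π.color i₁) :: B ∧
      (∀ v ∈ vals A, v < (π.perm i₁ : ℕ) + 1) ∧
      (∀ v ∈ vals B, v < (π.perm i₁ : ℕ) + 1) ∧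
      (i₁ = i₂ → B = [] ∧ Lset π ((S.erase i₁).erase i₂) = A) ∧
      (i₁ ≠ i₂ → ∃ B₀, B = B₀ ++ [((π.perm i₂ : ℕ) + 1, π.color i₂)] ∧
        Lset π ((S.erase i₁).erase i₂) = A ++ B₀) := by
  set p := π.perm with hp
  set f : Fin n → ℕ × ℕ := fun m => ((p m : ℕ) + 1, π.color m) with hf
  set l := S.sort (·≤·) with hl
  have hnodup : l.Nodup := Finset.sort_nodup _ _
  have hmax : p i₁ = (S.image p).max' (hS.image p) := by rw [hi₁]; simp
  have hi₁S : i₁ ∈ S := by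
    obtain ⟨a, ha, hpa⟩ := Finset.mem_image.mp (Finset.max'_mem (S.image p) (hS.image p))
    rw [hi₁, ← hpa]
    simpa using ha
  have hi₂S : i₂ ∈ S := hi₂ ▸ S.max'_mem hS
  have hvmax : ∀ m ∈ S, m ≠ i₁ → (p m : ℕ) + 1 < (p i₁ : ℕ) + 1 := by
    intro m hm hne
    have h1 : p m ≤ p i₁ := hmax ▸ Finset.le_max' _ _ (Finset.mem_image_of_mem p hm)
    have h2 : p m ≠ p i₁ := fun h => hne (p.injective h)
    have := lt_of_le_of_ne h1 h2
    exact Nat.add_lt_add_right (by exact_mod_cast this) 1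
  have hi₁l : i₁ ∈ l := by rw [hl, Finset.mem_sort]; exact hi₁S
  have hlne : l ≠ [] := fun h => by rw [h] at hi₁l; exact absurd hi₁l (by simp)
  obtain ⟨A', B', hsplit⟩ := List.append_of_mem hi₁l
  have hnodup' : (A' ++ i₁ :: B').Nodup := hsplit ▸ hnodup
  have hi₁A' : i₁ ∉ A' := fun h =>
    (List.nodup_append.mp hnodup').2.2 _ h _ List.mem_cons_self rfl
  have hi₁B' : i₁ ∉ B' :=
    fun h => (List.nodup_cons.mp (List.nodup_append.mp hnodup').2.1).1 h
  have hlast : l.getLast? = some i₂ := by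
    rw [List.getLast?_eq_getLast hlne, List.getLast_eq_getElem, hi₂,
      Finset.max'_eq_sorted_last]
  have hmemS : ∀ m ∈ A' ++ B', m ∈ S ∧ m ≠ i₁ := by
    intro m hm
    rcases List.mem_append.mp hm with h | h
    · refine ⟨?_, fun he => hi₁A' (he ▸ h)⟩
      rw [← Finset.mem_sort (·≤·), ← hl, hsplit]
      exact List.mem_append.mpr (Or.inl h)
    · refine ⟨?_, fun he => hi₁B' (he ▸ h)⟩
      rw [← Finset.mem_sort (·≤·), ← hl, hsplit]
      exact List.mem_append.mpr (Or.inr (List.mem_cons_of_mem _ h))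
  have herase : (S.erase i₁).sort (·≤·) = A' ++ B' := by
    rw [sort_erase', ← hl, hsplit, List.erase_append_right _ hi₁A']
    simp
  refine ⟨A'.map f, B'.map f, ?_, ?_, ?_, ?_, ?_⟩
  · show (l.map f) = _
    rw [hsplit]
    simp [hf]
  · intro v hv
    simp only [vals, List.map_map, List.mem_map] at hv
    obtain ⟨m, hm, rfl⟩ := hv
    have := hmemS m (List.mem_append.mpr (Or.inl hm))
    exact hvmax m this.1 this.2
  · intro v hv
    simp only [vals, List.map_map, List.mem_map] at hv
    obtain ⟨m, hm, rfl⟩ := hv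
    have := hmemS m (List.mem_append.mpr (Or.inr hm))
    exact hvmax m this.1 this.2
  · intro he
    rcases List.eq_nil_or_concat B' with h | ⟨C, b, rfl⟩
    · subst h
      refine ⟨rfl, ?_⟩
      unfold Lset
      rw [← he, Finset.erase_idem, herase]
      simp [hf, hp]
    · exfalso
      simp only [List.concat_eq_append] at hsplit hi₁B'
      have hb : l.getLast? = some b := by
        rw [hsplit, show A' ++ i₁ :: (C ++ [b]) = (A' ++ i₁ :: C) ++ [b] by simp,
          List.getLast?_concat]
      have hbe : i₂ = b := by
        rw [hlast] at hb
        exact Option.some_inj.mp hb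
      exact hi₁B' (by rw [he, hbe]; simp)
  · intro hne
    rcases List.eq_nil_or_concat B' with h | ⟨C, b, rfl⟩
    · exfalso
      subst h
      have hb : l.getLast? = some i₁ := by
        rw [hsplit, show A' ++ [i₁] = A' ++ [i₁] from rfl, List.getLast?_concat]
      rw [hlast] at hb
      exact hne (Option.some_inj.mp hb).symm
    · simp only [List.concat_eq_append] at hsplit hnodup' hi₁B' hmemS herase
      have hb : l.getLast? = some b := by
        rw [hsplit, show A' ++ i₁ :: (C ++ [b]) = (A' ++ i₁ :: C) ++ [b] by simp,
          List.getLast?_concat]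
      have hbe : i₂ = b := by
        rw [hlast] at hb
        exact Option.some_inj.mp hb
      subst hbe
      have hCb : (C ++ [i₂]).Nodup :=
        (List.nodup_cons.mp (List.nodup_append.mp hnodup').2.1).2
      have hi₂C : i₂ ∉ C := fun h =>
        (List.nodup_append.mp hCb).2.2 _ h _ List.mem_cons_self rfl
      have hi₂A' : i₂ ∉ A' := fun h =>
        (List.nodup_append.mp hnodup').2.2 _ h _ (by simp) rfl
      have herase2 : ((S.erase i₁).erase i₂).sort (·≤·) = A' ++ C := by
        rw [sort_erase', herase, List.erase_append_right _ hi₂A',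
          List.erase_append_right _ hi₂C]
        simp
      refine ⟨C.map f, by simp [hf], ?_⟩
      unfold Lset
      rw [herase2]
      simp [hf, hp]

/-! ### The main induction -/

lemma main_induction {k n : ℕ} (π : ColoredPerm n k) :
    ∀ (N : ℕ) (S : Finset (Fin n)), S.card ≤ N → ∀ (i : ℕ) (i₁ i₂ : Fin n),
      (shadowAux n π.perm S)[i]? = some (i₁, i₂) → i₁ ≠ i₂ →
      (∃ vt vb, (Pfold k (Lset π S))[i]? =
          some (Col.double (π.color i₂) (k + 1 - π.color i₂) vt vb)) ∧
      (∃ vt vb, (qOf k (Lset π S))[i]? =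
          some (Col.double (k + 1 - π.color i₁) (π.color i₁) vt vb)) := by
  intro N
  induction N with
  | zero =>
    intro S hcard i i₁ i₂ hline hne
    have hS : ¬ S.Nonempty := by
      rw [Finset.nonempty_iff_ne_empty]
      simp only [ne_eq, not_not]
      exact Finset.card_eq_zero.mp (Nat.le_zero.mp hcard)
    rw [shadowAux, dif_neg hS] at hline
    simp at hline
  | succ N ih =>
    intro S hcard i i₁ i₂ hline hne
    by_cases hS : S.Nonempty
    · rw [shadowAux, dif_pos hS] at hline
      cases i with
      | zero =>
        simp only [List.getElem?_cons_zero, Option.some_inj, Prod.mk.injEq] at hline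
        obtain ⟨h1, h2⟩ := hline
        obtain ⟨A, B, hLS, hA, hB, _, hcase2⟩ :=
          Lset_decomp π S hS i₁ i₂ h1.symm h2.symm
        obtain ⟨B₀, hB₀, _⟩ := hcase2 hne
        have hB₀vals : ∀ v ∈ vals B₀, v < (π.perm i₁ : ℕ) + 1 := by
          intro v hv
          apply hB
          rw [hB₀]
          simp only [vals, List.map_append, List.mem_append] at hv ⊢
          exact Or.inl hv
        have hxlt : (π.perm i₂ : ℕ) + 1 < (π.perm i₁ : ℕ) + 1 := by
          apply hB
          rw [hB₀]
          simp [vals]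
        constructor
        · rw [hLS, hB₀,
            Pfold_max_snoc A ((π.perm i₁ : ℕ) + 1) (π.color i₁) hA B₀
              ((π.perm i₂ : ℕ) + 1) (π.color i₂) hB₀vals hxlt]
          exact ⟨_, _, List.getElem?_cons_zero⟩
        · obtain ⟨a, b, T, hq, _⟩ :=
            qOf_max_snoc A B ((π.perm i₁ : ℕ) + 1) (π.color i₁) hA hB
              (by rw [hB₀]; simp)
          rw [hLS, hq]
          exact ⟨a, b, List.getElem?_cons_zero⟩
      | succ i =>
        simp only [List.getElem?_cons_succ] at hline
        have ha₁S : π.perm.symm ((S.image π.perm).max' (hS.image π.perm)) ∈ S := by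
          obtain ⟨a, ha, hpa⟩ :=
            Finset.mem_image.mp (Finset.max'_mem (S.image π.perm) (hS.image π.perm))
          rw [← hpa]
          simpa using ha
        have hcard' : ((S.erase (π.perm.symm ((S.image π.perm).max' (hS.image π.perm)))).erase
            (S.max' hS)).card ≤ N := by
          have h1 := Finset.card_erase_le (a := S.max' hS)
            (s := S.erase (π.perm.symm ((S.image π.perm).max' (hS.image π.perm))))
          have h2 := Finset.card_erase_of_mem ha₁S
          omega
        obtain ⟨hP, hQ⟩ := ih _ hcard' i i₁ i₂ hline hne
        obtain ⟨A, B, hLS, hA, hB, hcase1, hcase2⟩ :=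
          Lset_decomp π S hS _ _ rfl rfl
        by_cases hae : π.perm.symm ((S.image π.perm).max' (hS.image π.perm)) = S.max' hS
        · obtain ⟨hBnil, hLS'⟩ := hcase1 hae
          subst hBnil
          rw [hLS'] at hP hQ
          constructor
          · rw [hLS, Pfold_max_nil A _ _ hA, List.getElem?_cons_succ]
            exact hP
          · rw [hLS, qOf_max_nil A _ _ hA, List.getElem?_cons_succ]
            exact hQ
        · obtain ⟨B₀, hB₀, hLS'⟩ := hcase2 hae
          rw [hLS'] at hP hQ
          have hB₀vals : ∀ v ∈ vals B₀, v < (π.perm (π.perm.symm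
              ((S.image π.perm).max' (hS.image π.perm))) : ℕ) + 1 := by
            intro v hv
            apply hB
            rw [hB₀]
            simp only [vals, List.map_append, List.mem_append] at hv ⊢
            exact Or.inl hv
          have hxlt : (π.perm (S.max' hS) : ℕ) + 1 < (π.perm (π.perm.symm
              ((S.image π.perm).max' (hS.image π.perm))) : ℕ) + 1 := by
            apply hB
            rw [hB₀]
            simp [vals]
          constructor
          · rw [hLS, hB₀, Pfold_max_snoc A _ _ hA B₀ _ _ hB₀vals hxlt,
              List.getElem?_cons_succ]
            exact hP
          · obtain ⟨a, b, T, hq, hTeq⟩ := qOf_max_snoc A B _ _ hA hB (by rw [hB₀]; simp)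
            rw [hLS, hq, List.getElem?_cons_succ]
            have hdrop : B.dropLast = B₀ := by rw [hB₀]; simp
            rw [hdrop] at hTeq
            obtain ⟨vt, vb, hfound⟩ := hQ
            exact hTeq.getElem? hfound
    · rw [shadowAux, dif_neg hS] at hline
      simp at hline

/-! ### Identification of `PTab`/`QTab` with the list-level constructions -/

lemma Lset_univ_length {k n : ℕ} (π : ColoredPerm n k) :
    (Lset π (Finset.univ : Finset (Fin n))).length = n := by
  simp [Lset]

lemma PPartial_eq {k n : ℕ} (π : ColoredPerm n k) (m : ℕ) :
    PPartial k n π m = Pfold k ((Lset π Finset.univ).take m) := by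
  unfold PPartial Pfold Lset
  rw [Fin.sort_univ, ← List.map_take, List.foldl_map]
  rfl

lemma PTab_eq {k n : ℕ} (π : ColoredPerm n k) :
    PTab k n π = Pfold k (Lset π Finset.univ) := by
  rw [PTab, PPartial_eq,
    List.take_of_length_le (le_of_eq (Lset_univ_length π))]

lemma QTab_eq {k n : ℕ} (π : ColoredPerm n k) :
    QTab k n π = qOf k (Lset π Finset.univ) := by
  unfold QTab qOf
  rw [Lset_univ_length π]
  apply chainTab_congr
  intro i _
  unfold QChain lchain
  rw [PPartial_eq]
/-- Let `π` be a `k`-colored permutation with insertion pair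
`(P, Q) = (P(π), Q(π))`.  If the shadow line `L_i` of the square diagram of `π` passes
through two `X`'s, the leftmost being `X^{j₁}` (in column `i₁`) and the rightmost being
`X^{j₂}` (in column `i₂`), then the `i`-th column of `P` has height 2, with top `k`-ribbon
of height `j₂` and bottom `k`-ribbon of height `k + 1 − j₂`, while the column of `Q` in
the same position has height 2, with bottom `k`-ribbon of height `j₁` and top `k`-ribbon
of height `k + 1 − j₁`. -/
theorem shadow_double_column (k n : ℕ) (hk : 1 ≤ k) (π : ColoredPerm n k)
    (i : ℕ) (i₁ i₂ : Fin n) (hline : (shadowLines π)[i]? = some (i₁, i₂)) (hne : i₁ ≠ i₂) :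
    (∃ vt vb, (PTab k n π)[i]? =
        some (Col.double (π.color i₂) (k + 1 - π.color i₂) vt vb)) ∧
    (∃ vt vb, (QTab k n π)[i]? =
        some (Col.double (k + 1 - π.color i₁) (π.color i₁) vt vb)) := by
  have hmain := main_induction π Finset.univ.card Finset.univ (le_refl _) i i₁ i₂ hline hne
  rw [PTab_eq, QTab_eq]
  exact hmain

end KRF
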